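/- Let Γ be a finite connected bipartite graph with edge set E and vertex set V = V_1 ⊔ V_2 (every edge joining a vertex of V_1 to a vertex of V_2), and let G be a group. For i = 1, 2, let the product ∏_{v∈V_i} G act on ∏_{e∈E} G by letting the factor indexed by v act on the factor indexed by e (on the left for V_1 and on the right for V_2) via multiplication whenever v is a vertex of e. Let m be the rank of H^1(Γ, ℤ) (the number of independent cycles of Γ). Then the double coset space ∏_{v∈V_1} G \ ∏_{e∈E} G / ∏_{v∈V_2} G is in bijection, as a pointed set, with G^m modulo uniform conjugacy. -/

import Mathlib

universe u

/-- The bipartite graph determined by a set `E` of edges with endpoint maps `v1 : E → V1`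
and `v2 : E → V2`: vertices `V1 ⊕ V2`, with `inl x` adjacent to `inr y` iff some edge `e`
has `v1 e = x` and `v2 e = y`. -/
def bipartiteGraph {V1 V2 E : Type u} (v1 : E → V1) (v2 : E → V2) :
    SimpleGraph (V1 ⊕ V2) where
  Adj v w := ∃ e, (v = .inl (v1 e) ∧ w = .inr (v2 e)) ∨ (w = .inl (v1 e) ∧ v = .inr (v2 e))
  symm := by constructor; intro v w ⟨e, h⟩; exact ⟨e, h.symm⟩
  loopless := by constructor; rintro v ⟨e, ⟨h1, h2⟩ | ⟨h1, h2⟩⟩ <;> rw [h1] at h2 <;> exact Sum.inl_ne_inr h2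

/-- Uniform conjugacy of `m`-tuples in a group `G`: `(g₁,…,g_m) ∼ (g₁',…,g_m')` iff there is
a single `h ∈ G` with `g_j' = h g_j h⁻¹` for all `j`. -/
def UniformConj (G : Type u) [Group G] (m : ℕ) (a b : Fin m → G) : Prop :=
  ∃ h : G, ∀ j, b j = h * a j * h⁻¹

namespace S14

variable {V1 V2 E G : Type u} [Group G]

open Classical in
/-- Tree parallel transport (vertex potential) from the root `r`. -/
noncomputable def phi (r : V1 ⊕ V2) (par : ∀ w : V1 ⊕ V2, w ≠ r → V1 ⊕ V2)
    (ed : ∀ w : V1 ⊕ V2, w ≠ r → E) (rank : V1 ⊕ V2 → ℕ)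
    (hrank : ∀ w h, rank (par w h) < rank w)
    (x : E → G) (w : V1 ⊕ V2) : G :=
  if h : w = r then 1
  else (if w.isLeft then x (ed w h) else (x (ed w h))⁻¹) *
    phi r par ed rank hrank x (par w h)
termination_by rank w
decreasing_by exact hrank w h

variable (v1 : E → V1) (v2 : E → V2)
variable (r : V1 ⊕ V2) (par : ∀ w : V1 ⊕ V2, w ≠ r → V1 ⊕ V2)
    (ed : ∀ w : V1 ⊕ V2, w ≠ r → E) (rank : V1 ⊕ V2 → ℕ)
    (hrank : ∀ w h, rank (par w h) < rank w)

lemma phi_root (x : E → G) : phi r par ed rank hrank x r = 1 := by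
  rw [phi, dif_pos rfl]

lemma phi_ne (x : E → G) (w : V1 ⊕ V2) (h : w ≠ r) :
    phi r par ed rank hrank x w =
      (if w.isLeft then x (ed w h) else (x (ed w h))⁻¹) *
        phi r par ed rank hrank x (par w h) := by
  rw [phi, dif_neg h]

/-- The holonomy of `x` at an edge `e`, relative to the tree data. -/
noncomputable def holE (x : E → G) (e : E) : G :=
  (phi r par ed rank hrank x (.inl (v1 e)))⁻¹ * x e *
    phi r par ed rank hrank x (.inr (v2 e))

variable
    (hA : ∀ a (h : (Sum.inl a : V1 ⊕ V2) ≠ r),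
      v1 (ed _ h) = a ∧ par _ h = Sum.inr (v2 (ed _ h)))
    (hB : ∀ b (h : (Sum.inr b : V1 ⊕ V2) ≠ r),
      v2 (ed _ h) = b ∧ par _ h = Sum.inl (v1 (ed _ h)))

include hA hB in
/-- Gauge covariance of the vertex potential. -/
lemma phi_covar (f : V1 → G) (g : V2 → G) (x y : E → G)
    (hy : ∀ e, y e = f (v1 e) * x e * g (v2 e)) (w : V1 ⊕ V2) :
    phi r par ed rank hrank y w =
      Sum.elim f (fun b => (g b)⁻¹) w * phi r par ed rank hrank x w *
        (Sum.elim f (fun b => (g b)⁻¹) r)⁻¹ := by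
  suffices H : ∀ n (w : V1 ⊕ V2), rank w ≤ n →
      phi r par ed rank hrank y w =
        Sum.elim f (fun b => (g b)⁻¹) w * phi r par ed rank hrank x w *
          (Sum.elim f (fun b => (g b)⁻¹) r)⁻¹ from H (rank w) w le_rfl
  intro n
  induction n with
  | zero =>
    intro w hw
    by_cases h : w = r
    · subst h; rw [phi_root, phi_root]; group
    · exact absurd (lt_of_lt_of_le (hrank w h) hw) (Nat.not_lt_zero _)
  | succ n ih =>
    intro w hw
    by_cases h : w = r
    · subst h; rw [phi_root, phi_root]; group
    · have hrec := ih (par w h) (by have := hrank w h; omega)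
      rw [phi_ne r par ed rank hrank y w h, phi_ne r par ed rank hrank x w h, hrec]
      cases w with
      | inl a =>
        obtain ⟨h1, h2⟩ := hA a h
        rw [hy (ed _ h), h1, h2]
        simp only [Sum.isLeft_inl, if_true, Sum.elim_inl, Sum.elim_inr]
        group
      | inr b =>
        obtain ⟨h1, h2⟩ := hB b h
        rw [hy (ed _ h), h1, h2]
        simp only [Sum.isLeft_inr, if_false, Sum.elim_inl, Sum.elim_inr, Bool.false_eq_true]
        group

include hA hB in
/-- Holonomy transforms by uniform conjugation under gauge transformations. -/
lemma holE_covar (f : V1 → G) (g : V2 → G) (x y : E → G)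
    (hy : ∀ e, y e = f (v1 e) * x e * g (v2 e)) :
    ∃ c : G, ∀ e, holE v1 v2 r par ed rank hrank y e =
      c * holE v1 v2 r par ed rank hrank x e * c⁻¹ := by
  refine ⟨Sum.elim f (fun b => (g b)⁻¹) r, fun e => ?_⟩
  unfold holE
  rw [phi_covar v1 v2 r par ed rank hrank hA hB f g x y hy,
      phi_covar v1 v2 r par ed rank hrank hA hB f g x y hy, hy e]
  simp only [Sum.elim_inl, Sum.elim_inr]
  group

include hA hB in
/-- The holonomy vanishes on tree edges. -/
lemma holE_ed (x : E → G) (w : V1 ⊕ V2) (h : w ≠ r) :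
    holE v1 v2 r par ed rank hrank x (ed w h) = 1 := by
  unfold holE
  cases w with
  | inl a =>
    obtain ⟨h1, h2⟩ := hA a h
    have := phi_ne r par ed rank hrank x _ h
    rw [h2] at this
    simp only [Sum.isLeft_inl, if_true] at this
    rw [h1, this]; group
  | inr b =>
    obtain ⟨h1, h2⟩ := hB b h
    have := phi_ne r par ed rank hrank x _ h
    rw [h2] at this
    simp only [Sum.isLeft_inr, if_false, Bool.false_eq_true] at this
    rw [h1, this]; group

/-- If `x` is `1` on all tree edges, the vertex potential is trivial. -/
lemma phi_trivial (x : E → G) (hx : ∀ w h, x (ed w h) = 1) (w : V1 ⊕ V2) :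
    phi r par ed rank hrank x w = 1 := by
  suffices H : ∀ n (w : V1 ⊕ V2), rank w ≤ n → phi r par ed rank hrank x w = 1 from
    H (rank w) w le_rfl
  intro n
  induction n with
  | zero =>
    intro w hw
    by_cases h : w = r
    · subst h; rw [phi_root]
    · exact absurd (lt_of_lt_of_le (hrank w h) hw) (Nat.not_lt_zero _)
  | succ n ih =>
    intro w hw
    by_cases h : w = r
    · subst h; rw [phi_root]
    · rw [phi_ne r par ed rank hrank x w h, hx w h,
        ih (par w h) (by have := hrank w h; omega)]
      simp

include hA hB hrank in
lemma ed_inj (w : V1 ⊕ V2) (h : w ≠ r) (w' : V1 ⊕ V2) (h' : w' ≠ r)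
    (he : ed w h = ed w' h') : w = w' := by
  cases w with
  | inl a =>
    cases w' with
    | inl a' =>
      have := (hA a h).1
      have h2 := (hA a' h').1
      rw [← he] at h2
      rw [← this, ← h2]
    | inr b' =>
      exfalso
      have hp : par (Sum.inr b') h' = Sum.inl a := by
        rw [(hB b' h').2, ← he, (hA a h).1]
      have hp' : par (Sum.inl a) h = Sum.inr b' := by
        rw [(hA a h).2, he, (hB b' h').1]
      have r1 := hrank (Sum.inl a) h
      have r2 := hrank (Sum.inr b') h'
      rw [hp'] at r1; rw [hp] at r2
      omega
  | inr b =>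
    cases w' with
    | inr b' =>
      have := (hB b h).1
      have h2 := (hB b' h').1
      rw [← he] at h2
      rw [← this, ← h2]
    | inl a' =>
      exfalso
      have hp : par (Sum.inl a') h' = Sum.inr b := by
        rw [(hA a' h').2, ← he, (hB b h).1]
      have hp' : par (Sum.inr b) h = Sum.inl a' := by
        rw [(hB b h).2, he, (hA a' h').1]
      have r1 := hrank (Sum.inr b) h
      have r2 := hrank (Sum.inl a') h'
      rw [hp'] at r1; rw [hp] at r2
      omega

/-- Existence of the rooted spanning structure from connectivity. -/
lemma exists_struct (hconn : (bipartiteGraph v1 v2).Connected) :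
    ∃ (r : V1 ⊕ V2) (par : ∀ w : V1 ⊕ V2, w ≠ r → V1 ⊕ V2)
      (ed : ∀ w : V1 ⊕ V2, w ≠ r → E) (rank : V1 ⊕ V2 → ℕ),
      (∀ w h, rank (par w h) < rank w) ∧
      (∀ a (h : (Sum.inl a : V1 ⊕ V2) ≠ r),
        v1 (ed _ h) = a ∧ par _ h = Sum.inr (v2 (ed _ h))) ∧
      (∀ b (h : (Sum.inr b : V1 ⊕ V2) ≠ r),
        v2 (ed _ h) = b ∧ par _ h = Sum.inl (v1 (ed _ h))) := by
  obtain ⟨r⟩ := hconn.nonempty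
  set Γ := bipartiteGraph v1 v2 with hΓ
  have key : ∀ w : V1 ⊕ V2, w ≠ r → ∃ (u : V1 ⊕ V2) (e : E),
      Γ.dist r u < Γ.dist r w ∧
      ((w = .inl (v1 e) ∧ u = .inr (v2 e)) ∨ (w = .inr (v2 e) ∧ u = .inl (v1 e))) := by
    intro w hw
    obtain ⟨p, hp⟩ := hconn.exists_walk_length_eq_dist r w
    obtain ⟨u, adj, q, hq⟩ := (p.reverse).exists_eq_cons_of_ne hw
    have hlen : q.length + 1 = Γ.dist r w := by
      have := congrArg SimpleGraph.Walk.length hq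
      rw [SimpleGraph.Walk.length_reverse, hp] at this
      simpa [SimpleGraph.Walk.length_cons] using this.symm
    have hdu : Γ.dist r u ≤ q.length := by
      have := SimpleGraph.dist_le q.reverse
      simpa using this
    obtain ⟨e, hcase⟩ := adj
    refine ⟨u, e, by omega, ?_⟩
    rcases hcase with ⟨h1, h2⟩ | ⟨h1, h2⟩
    · exact Or.inl ⟨h1, h2⟩
    · exact Or.inr ⟨h2, h1⟩
  choose u e hlt hcase using key
  refine ⟨r, u, e, Γ.dist r, hlt, ?_, ?_⟩
  · intro a h
    rcases hcase _ h with ⟨h1, h2⟩ | ⟨h1, h2⟩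
    · exact ⟨(Sum.inl.inj h1).symm, h2⟩
    · exact absurd h1 (by simp)
  · intro b h
    rcases hcase _ h with ⟨h1, h2⟩ | ⟨h1, h2⟩
    · exact absurd h1 (by simp)
    · exact ⟨(Sum.inr.inj h1).symm, h2⟩

open Classical in
/-- Section: extend a tuple on non-tree edges by `1` on tree edges. -/
noncomputable def sec (t : {e : E // ¬ ∃ w h, ed w h = e} → G) : E → G :=
  fun e => if h : ∃ w h', ed w h' = e then 1 else t ⟨e, h⟩

lemma sec_ed (t : {e : E // ¬ ∃ w h, ed w h = e} → G) (w : V1 ⊕ V2) (h : w ≠ r) :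
    sec r ed t (ed w h) = 1 := dif_pos ⟨w, h, rfl⟩

lemma sec_not (t : {e : E // ¬ ∃ w h, ed w h = e} → G) (e : E)
    (h : ¬ ∃ w h', ed w h' = e) : sec r ed t e = t ⟨e, h⟩ := dif_neg h

lemma holE_sec (t : {e : E // ¬ ∃ w h, ed w h = e} → G)
    (n : {e : E // ¬ ∃ w h, ed w h = e}) :
    holE v1 v2 r par ed rank hrank (sec r ed t) n.1 = t n := by
  unfold holE
  rw [phi_trivial r par ed rank hrank _ (fun w h => sec_ed r ed t w h),
      phi_trivial r par ed rank hrank _ (fun w h => sec_ed r ed t w h),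
      sec_not r ed t n.1 n.2]
  simp

include hA hB in
lemma sec_holE (x : E → G) :
    sec r ed (fun n => holE v1 v2 r par ed rank hrank x n.1) =
      holE v1 v2 r par ed rank hrank x := by
  funext e
  by_cases h : ∃ w h', ed w h' = e
  · obtain ⟨w, hw, hwe⟩ := h
    rw [show e = ed w hw from hwe.symm, sec_ed,
      holE_ed v1 v2 r par ed rank hrank hA hB x w hw]
  · rw [sec_not r ed _ e h]

lemma self_gauge (x : E → G) (e : E) :
    x e = phi r par ed rank hrank x (.inl (v1 e)) *
      holE v1 v2 r par ed rank hrank x e *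
        (phi r par ed rank hrank x (.inr (v2 e)))⁻¹ := by
  unfold holE; group

end S14

/-- Let `Γ` be a finite connected bipartite graph with edge set `E` and
vertex set `V = V₁ ⊔ V₂` (each edge `e` joining `v1 e ∈ V₁` to `v2 e ∈ V₂`), and let `G` be
a group.  Let `∏_{v∈V₁} G` act on `∏_{e∈E} G` on the left and `∏_{v∈V₂} G` on the right,
the factor indexed by a vertex `v` acting by multiplication on the factors indexed by edges
through `v`.  Let `m` be the rank of `H¹(Γ,ℤ)`, which for a finite connected (multi)graph
equals `|E| − |V| + 1`.  Then the double-coset space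
`∏_{v∈V₁} G \\ ∏_{e∈E} G / ∏_{v∈V₂} G` is in bijection, as a pointed set, with `G^m`
modulo uniform conjugacy. -/
theorem statement_14
    (V1 V2 E : Type u) [Finite V1] [Finite V2] [Finite E]
    (v1 : E → V1) (v2 : E → V2)
    (hconn : (bipartiteGraph v1 v2).Connected)
    (G : Type u) [Group G] :
    ∃ e : DoubleCoset.Quotient
        (Set.range (Pi.monoidHom fun e => Pi.evalMonoidHom (fun _ : V1 => G) (v1 e)))
        (Set.range (Pi.monoidHom fun e => Pi.evalMonoidHom (fun _ : V2 => G) (v2 e))) ≃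
      Quot (UniformConj G (Nat.card E + 1 - (Nat.card V1 + Nat.card V2))),
      e (Quotient.mk (DoubleCoset.setoid _ _) 1) = Quot.mk _ 1 := by
  classical
  obtain ⟨r, par, ed, rank, hrank, hA, hB⟩ := S14.exists_struct v1 v2 hconn
  haveI : Fintype V1 := Fintype.ofFinite _
  haveI : Fintype V2 := Fintype.ofFinite _
  haveI : Fintype E := Fintype.ofFinite _
  set m := Nat.card E + 1 - (Nat.card V1 + Nat.card V2) with hm
  -- the non-tree edges
  set N := {e : E // ¬ ∃ w h, ed w h = e} with hN
  -- cardinality of the set of tree edges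
  have eqv : {w : V1 ⊕ V2 // w ≠ r} ≃ {e : E // ∃ w h, ed w h = e} :=
    Equiv.ofBijective (fun w => ⟨ed w.1 w.2, w.1, w.2, rfl⟩)
      ⟨fun a b hab => Subtype.ext
          (S14.ed_inj v1 v2 r par ed rank hrank hA hB _ _ _ _ (Subtype.mk.injEq .. ▸ hab)),
       fun e => by
        obtain ⟨w, h, hw⟩ := e.2
        exact ⟨⟨w, h⟩, Subtype.ext hw⟩⟩
  have cardNe : Fintype.card {w : V1 ⊕ V2 // w ≠ r} = Fintype.card (V1 ⊕ V2) - 1 := by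
    have h1 : Fintype.card {w : V1 ⊕ V2 // ¬ (w = r)} =
        Fintype.card (V1 ⊕ V2) - Fintype.card {w : V1 ⊕ V2 // w = r} :=
      Fintype.card_subtype_compl _
    simp only [Fintype.card_subtype_eq] at h1
    exact h1
  have cardT : Fintype.card {e : E // ∃ w h, ed w h = e} = Fintype.card (V1 ⊕ V2) - 1 := by
    rw [← Fintype.card_congr eqv]; exact cardNe
  have cardTle : Fintype.card {e : E // ∃ w h, ed w h = e} ≤ Fintype.card E :=
    Fintype.card_subtype_le _
  have cardVpos : 0 < Fintype.card (V1 ⊕ V2) := Fintype.card_pos_iff.mpr ⟨r⟩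
  have cardN : Fintype.card N = m := by
    have h1 : Fintype.card N =
        Fintype.card E - Fintype.card {e : E // ∃ w h, ed w h = e} :=
      Fintype.card_subtype_compl _
    have hsum : Fintype.card (V1 ⊕ V2) = Fintype.card V1 + Fintype.card V2 :=
      Fintype.card_sum
    have hm2 : m = Fintype.card E + 1 - (Fintype.card V1 + Fintype.card V2) := by
      rw [hm, Nat.card_eq_fintype_card, Nat.card_eq_fintype_card,
        Nat.card_eq_fintype_card]
    omega
  let idx : N ≃ Fin m := Fintype.equivFinOfCardEq cardN
  -- the two monoid homs
  let F1 := Pi.monoidHom fun e => Pi.evalMonoidHom (fun _ : V1 => G) (v1 e)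
  let F2 := Pi.monoidHom fun e => Pi.evalMonoidHom (fun _ : V2 => G) (v2 e)
  have relIff : ∀ x y : E → G,
      DoubleCoset.setoid (Set.range ⇑F1) (Set.range ⇑F2) x y ↔
        ∃ f : V1 → G, ∃ g : V2 → G, ∀ e, y e = f (v1 e) * x e * g (v2 e) := by
    intro x y
    constructor
    · intro hxy
      obtain ⟨a, ha, b, hb, hy⟩ :=
        (DoubleCoset.rel_iff (H := F1.range) (K := F2.range)).mp hxy
      obtain ⟨f, rfl⟩ := MonoidHom.mem_range.mp ha
      obtain ⟨g, rfl⟩ := MonoidHom.mem_range.mp hb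
      exact ⟨f, g, fun e => congrFun hy e⟩
    · rintro ⟨f, g, hfg⟩
      exact (DoubleCoset.rel_iff (H := F1.range) (K := F2.range)).mpr
        ⟨F1 f, MonoidHom.mem_range.mpr ⟨f, rfl⟩, F2 g,
          MonoidHom.mem_range.mpr ⟨g, rfl⟩, funext hfg⟩
  -- holonomy and section
  let hol : (E → G) → (N → G) := fun x n => S14.holE v1 v2 r par ed rank hrank x n.1
  let rel2 : (N → G) → (N → G) → Prop := fun a b => ∃ c : G, ∀ n, b n = c * a n * c⁻¹
  -- the first equivalence
  let fwd : DoubleCoset.Quotient (Set.range ⇑F1) (Set.range ⇑F2) → Quot rel2 :=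
    Quotient.lift (fun x => Quot.mk rel2 (hol x)) (by
      intro x y hxy
      obtain ⟨f, g, hfg⟩ := (relIff x y).mp hxy
      obtain ⟨c, hc⟩ := S14.holE_covar v1 v2 r par ed rank hrank hA hB f g x y hfg
      exact Quot.sound ⟨c, fun n => hc n.1⟩)
  let bwd : Quot rel2 → DoubleCoset.Quotient (Set.range ⇑F1) (Set.range ⇑F2) :=
    Quot.lift (fun t => Quotient.mk (DoubleCoset.setoid _ _) (S14.sec r ed t)) (by
      intro t t' ⟨c, hc⟩
      apply Quotient.sound
      refine (relIff _ _).mpr ⟨fun _ => c, fun _ => c⁻¹, fun e => ?_⟩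
      by_cases h : ∃ w h', ed w h' = e
      · obtain ⟨w, hw, hwe⟩ := h
        rw [show e = ed w hw from hwe.symm, S14.sec_ed, S14.sec_ed]
        group
      · rw [S14.sec_not r ed t e h, S14.sec_not r ed t' e h, hc ⟨e, h⟩])
  have left_inv : ∀ q, bwd (fwd q) = q := by
    intro q
    induction q using Quotient.ind with
    | _ x =>
      show Quotient.mk _ (S14.sec r ed (hol x)) = Quotient.mk _ x
      apply Quotient.sound
      refine (relIff _ _).mpr
        ⟨fun a => S14.phi r par ed rank hrank x (.inl a),
         fun b => (S14.phi r par ed rank hrank x (.inr b))⁻¹, fun e => ?_⟩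
      rw [show S14.sec r ed (hol x) = S14.holE v1 v2 r par ed rank hrank x from
        S14.sec_holE v1 v2 r par ed rank hrank hA hB x]
      exact S14.self_gauge v1 v2 r par ed rank hrank x e
  have t1 : ∀ t, bwd (Quot.mk rel2 t) = Quotient.mk (DoubleCoset.setoid _ _) (S14.sec r ed t) :=
    fun t => rfl
  have t2 : ∀ x, fwd (Quotient.mk (DoubleCoset.setoid _ _) x) = Quot.mk rel2 (hol x) :=
    fun x => rfl
  have right_inv : ∀ q, fwd (bwd q) = q := by
    intro q
    refine Quot.inductionOn q fun t => ?_
    rw [t1, t2]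
    exact congrArg (Quot.mk rel2)
      (funext fun n => S14.holE_sec v1 v2 r par ed rank hrank t n)
  let e1 : DoubleCoset.Quotient (Set.range ⇑F1) (Set.range ⇑F2) ≃ Quot rel2 :=
    ⟨fwd, bwd, left_inv, right_inv⟩
  -- transport to Fin m
  let e2 : Quot rel2 ≃ Quot (UniformConj G m) :=
    Quot.congr (Equiv.arrowCongr idx (Equiv.refl G)) (by
      intro a b
      constructor
      · rintro ⟨c, hc⟩
        exact ⟨c, fun j => by simpa [Equiv.arrowCongr] using hc (idx.symm j)⟩
      · rintro ⟨c, hc⟩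
        refine ⟨c, fun n => ?_⟩
        have := hc (idx n)
        simpa [Equiv.arrowCongr] using this)
  let e3 := e1.trans e2
  refine ⟨e3.trans (Equiv.swap (e3 (Quotient.mk (DoubleCoset.setoid _ _) 1)) (Quot.mk _ 1)), ?_⟩
  exact Equiv.swap_apply_left _ _
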